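/- Let $b, m > 0$ and $h \ge h^* = \frac{2b+2}{(2b+1)^{b/(b+1)}} m^{1/(b+1)}$, and let $t_h$ be the smaller solution of $t^2(h-t)^{2b} = m^2$ in $(0,h)$. Then $t_h$ is a point of global minimum of $g_h(t) = \frac{m^2}{t} + \frac{h^{2b+1} - (h-\min\{h,t\})^{2b+1}}{2b+1}$ over $(0, \infty)$, i.e. $g_h(t_h) \le g_h(t)$ for all $t > 0$. -/

import Mathlib

set_option maxHeartbeats 2000000 in
/-- For h ≥ h^*, the smaller solution t_h is a global minimum point of g_h. -/
theorem th_global_min (b m h t : ℝ) (hb : 0 < b) (hm : 0 < m)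
    (hh : (2*b+2) / (2*b+1) ^ (b/(b+1)) * m ^ (1/(b+1)) ≤ h)
    (ht : 0 < t) (ht' : t < h/(b+1)) (he : t^2 * (h - t) ^ (2*b) = m^2) :
    ∀ s : ℝ, 0 < s →
      m^2 / t + (h ^ (2*b+1) - (h - min h t) ^ (2*b+1)) / (2*b+1) ≤
      m^2 / s + (h ^ (2*b+1) - (h - min h s) ^ (2*b+1)) / (2*b+1) := by
  have hb1 : (0:ℝ) < b + 1 := by linarith
  have hppos : (0:ℝ) < 2*b+1 := by linarith
  have hp1 : (1:ℝ) ≤ 2*b+1 := by linarith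
  have hq0 : 0 < h/(b+1) := ht.trans ht'
  have hh0 : 0 < h := by
    rcases div_pos_iff.mp hq0 with ⟨h1, _⟩ | ⟨_, h2⟩
    · exact h1
    · linarith
  have hqh : h/(b+1) ≤ h := div_le_self hh0.le (by linarith)
  have hth : t < h := ht'.trans_le hqh
  have hht : 0 < h - t := by linarith
  set q := h/(b+1) with hqdef
  set f : ℝ → ℝ := fun x => x^2 * (h - x)^(2*b) with hfdef
  have hft : f t = m^2 := he
  -- helper : y^(2b-1)*y = y^(2b)
  have key : ∀ y : ℝ, y ≠ 0 → y^(2*b-1) * y = y^(2*b) := by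
    intro y hy
    rw [← Real.rpow_add_one hy]
    ring_nf
  -- derivative of f
  have hfd : ∀ x : ℝ, 0 < h - x →
      HasDerivAt f (2*x*(h-x)^(2*b) + x^2 * ((2*b) * (h-x)^(2*b-1) * (-1))) x := by
    intro x hx
    have h1 : HasDerivAt (fun y:ℝ => y^2) (2*x) x := by
      simpa using hasDerivAt_pow 2 x
    have hsub : HasDerivAt (fun y:ℝ => h - y) (-1) x := by
      simpa using (hasDerivAt_id x).const_sub h
    have h2 : HasDerivAt (fun y:ℝ => (h - y)^(2*b)) ((2*b) * (h-x)^(2*b-1) * (-1)) x :=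
      (Real.hasDerivAt_rpow_const (Or.inl hx.ne')).comp x hsub
    exact h1.mul h2
  have hfc : Continuous f := by
    apply (continuous_pow 2).mul
    refine continuous_iff_continuousAt.mpr fun x => ?_
    exact (Real.continuousAt_rpow_const _ _ (Or.inr (by positivity))).comp
      ((continuous_const.sub continuous_id).continuousAt)
  -- f strictly increasing on [0, q]
  have hfmono : StrictMonoOn f (Set.Icc 0 q) := by
    apply strictMonoOn_of_deriv_pos (convex_Icc _ _) hfc.continuousOn
    intro x hx
    rw [interior_Icc] at hx
    obtain ⟨hx0, hxq⟩ := hx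
    have hxh : 0 < h - x := by
      have : x < h := hxq.trans_le hqh
      linarith
    rw [(hfd x hxh).deriv]
    have hA : 0 < (h-x)^(2*b-1) := Real.rpow_pos_of_pos hxh _
    have hx1 : 0 < h - (b+1)*x := by
      rw [hqdef, lt_div_iff₀ hb1] at hxq
      linarith
    rw [← key (h-x) hxh.ne']
    nlinarith [mul_pos (mul_pos (mul_pos two_pos hx0) hA) hx1]
  -- f antitone on [q, h]
  have hfanti : AntitoneOn f (Set.Icc q h) := by
    apply antitoneOn_of_deriv_nonpos (convex_Icc _ _) hfc.continuousOn
    · intro x hx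
      rw [interior_Icc] at hx
      exact ((hfd x (by linarith [hx.2] : 0 < h - x)).differentiableAt).differentiableWithinAt
    · intro x hx
      rw [interior_Icc] at hx
      obtain ⟨hxq, hxh⟩ := hx
      have hxh' : 0 < h - x := by linarith
      have hx0 : 0 < x := lt_trans hq0 hxq
      rw [(hfd x hxh').deriv]
      have hA : 0 < (h-x)^(2*b-1) := Real.rpow_pos_of_pos hxh' _
      have hx1 : h - (b+1)*x ≤ 0 := by
        rw [hqdef, div_lt_iff₀ hb1] at hxq
        linarith
      rw [← key (h-x) hxh'.ne']
      nlinarith [mul_nonneg (mul_nonneg (mul_nonneg (by norm_num : (0:ℝ) ≤ 2) hx0.le) hA.le)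
        (by linarith : (0:ℝ) ≤ -(h-(b+1)*x))]
  -- square of rpow helper
  have sq_rpow : ∀ y : ℝ, 0 < y → (y^(b+1))^2 = y^2 * y^(2*b) := by
    intro y hy
    rw [← Real.rpow_natCast (y^(b+1)) 2, ← Real.rpow_mul hy.le]
    rw [show (b+1)*((2:ℕ):ℝ) = (2:ℕ) + 2*b by push_cast; ring]
    rw [Real.rpow_add hy, Real.rpow_natCast]
  -- key inequality from hh
  have hKpos : (0:ℝ) < (2*b+1) ^ (b/(b+1)) := Real.rpow_pos_of_pos hppos _
  have hMpos : (0:ℝ) < m ^ (1/(b+1)) := Real.rpow_pos_of_pos hm _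
  set H : ℝ := (2*b+2) / (2*b+1) ^ (b/(b+1)) * m ^ (1/(b+1)) with hHdef
  have hHpos : 0 < H := by positivity
  have hHb : H ^ (b+1) = (2*b+2)^(b+1) * m / (2*b+1)^b := by
    rw [hHdef, Real.mul_rpow (by positivity) (by positivity),
        Real.div_rpow (by positivity) (by positivity),
        ← Real.rpow_mul hppos.le, ← Real.rpow_mul hm.le,
        div_mul_cancel₀ _ hb1.ne', one_div, inv_mul_cancel₀ hb1.ne', Real.rpow_one]
    ring
  have hkey : (2*b+2)^2 * (2*b+2)^(2*b) * m^2 ≤ h^2 * h^(2*b) * (2*b+1)^(2*b) := by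
    have h1 : H^(b+1) ≤ h^(b+1) := Real.rpow_le_rpow hHpos.le hh hb1.le
    have hA := Real.rpow_pos_of_pos hHpos (b+1)
    have h2 : (H^(b+1))^2 ≤ (h^(b+1))^2 := pow_le_pow_left₀ hA.le h1 2
    rw [hHb, sq_rpow h hh0, div_pow, mul_pow, sq_rpow _ (by linarith : (0:ℝ) < 2*b+2)] at h2
    have h3 : ((2*b+1)^b)^2 = (2*b+1)^(2*b) := by
      rw [← Real.rpow_natCast ((2*b+1)^b) 2, ← Real.rpow_mul hppos.le]
      norm_num
      ring_nf
    rw [h3, div_le_iff₀ (Real.rpow_pos_of_pos hppos _)] at h2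
    linarith [h2]
  -- t ≤ h/(2b+2)
  have htc : t ≤ h/(2*b+2) := by
    by_contra hcon
    push_neg at hcon
    have hc0 : 0 < h/(2*b+2) := by positivity
    have hcq : h/(2*b+2) ≤ q := by
      rw [hqdef, div_le_div_iff₀ (by linarith) hb1]
      nlinarith [mul_pos hh0 hb1]
    have hlt : f (h/(2*b+2)) < f t :=
      hfmono ⟨hc0.le, hcq⟩ ⟨ht.le, ht'.le⟩ hcon
    have hge : m^2 ≤ f (h/(2*b+2)) := by
      have e1 : h - h/(2*b+2) = h*(2*b+1)/(2*b+2) := by field_simp; ring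
      have e2 : (h*(2*b+1)/(2*b+2))^(2*b) = h^(2*b) * (2*b+1)^(2*b) / (2*b+2)^(2*b) := by
        rw [Real.div_rpow (by positivity) (by positivity), Real.mul_rpow hh0.le hppos.le]
      show m^2 ≤ (h/(2*b+2))^2 * (h - h/(2*b+2))^(2*b)
      rw [e1, e2, div_pow, div_mul_div_comm, le_div_iff₀ (by positivity)]
      linarith [hkey]
    rw [hft] at hlt
    linarith
  have h2t : (2*b+2)*t ≤ h := by
    rw [le_div_iff₀ (by linarith : (0:ℝ) < 2*b+2)] at htc
    linarith
  -- existence of second root u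
  have hfq : m^2 < f q := by
    have := hfmono ⟨ht.le, ht'.le⟩ ⟨hq0.le, le_refl q⟩ ht'
    rwa [hft] at this
  have hfh : f h = 0 := by
    simp only [hfdef, sub_self, Real.zero_rpow (show (2*b:ℝ) ≠ 0 by positivity), mul_zero]
  obtain ⟨u, hu, hfu⟩ : ∃ u ∈ Set.Icc q h, f u = m^2 := by
    have himg := intermediate_value_Icc' hqh hfc.continuousOn
    have hmem : m^2 ∈ Set.Icc (f h) (f q) := ⟨by rw [hfh]; positivity, hfq.le⟩
    obtain ⟨u, hu, hfu⟩ := himg hmem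
    exact ⟨u, hu, hfu⟩
  -- G and its derivative
  set G : ℝ → ℝ := fun x => m^2/x + (h^(2*b+1) - (h - x)^(2*b+1))/(2*b+1) with hGdef
  have hGd : ∀ x : ℝ, x ≠ 0 → HasDerivAt G (-(m^2/x^2) + (h-x)^(2*b)) x := by
    intro x hx
    have h1 : HasDerivAt (fun y:ℝ => m^2/y) (-(m^2/x^2)) x := by
      have := (hasDerivAt_inv hx).const_mul (m^2)
      simpa [div_eq_mul_inv, mul_neg] using this
    have hsub : HasDerivAt (fun y:ℝ => h - y) (-1) x := by
      simpa using (hasDerivAt_id x).const_sub h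
    have h2 : HasDerivAt (fun y:ℝ => (h - y)^(2*b+1)) ((2*b+1) * (h-x)^(2*b) * (-1)) x := by
      have := (Real.hasDerivAt_rpow_const (x := h - x) (p := 2*b+1) (Or.inr hp1)).comp x hsub
      rw [show (2*b+1-1 : ℝ) = 2*b by ring] at this
      exact this
    have h3 : HasDerivAt (fun y:ℝ => (h^(2*b+1) - (h-y)^(2*b+1))/(2*b+1))
        ((0 - (2*b+1) * (h-x)^(2*b) * (-1))/(2*b+1)) x :=
      ((hasDerivAt_const x (h^(2*b+1))).sub h2).div_const _
    have h4 := h1.add h3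
    rw [mul_neg_one, zero_sub, neg_neg, mul_div_cancel_left₀ _ hppos.ne'] at h4
    exact h4
  -- g(t) ≤ h^p/p
  have hmt : m^2/t = t * (h-t)^(2*b) := by
    rw [div_eq_iff ht.ne']
    linear_combination -he
  have hGtop : G t ≤ h^(2*b+1)/(2*b+1) := by
    have hE : (h-t)^(2*b+1) = (h-t)^(2*b) * (h - t) := Real.rpow_add_one hht.ne' (2*b)
    have hB : (0:ℝ) ≤ (h-t)^(2*b) := Real.rpow_nonneg hht.le _
    have h5 : t*(h-t)^(2*b) ≤ (h-t)^(2*b)*(h-t)/(2*b+1) := by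
      rw [le_div_iff₀ hppos]
      have h6 : (h-t)^(2*b)*((2*b+1)*t) ≤ (h-t)^(2*b)*(h-t) :=
        mul_le_mul_of_nonneg_left (by linarith) hB
      linarith [h6]
    simp only [hGdef]
    rw [hmt, hE, sub_div]
    linarith
  -- main case analysis
  intro s hs
  have hmint : min h t = t := min_eq_right hth.le
  rcases le_or_gt s h with hsh | hsh
  · have hmins : min h s = s := min_eq_right hsh
    rw [hmint, hmins]
    show G t ≤ G s
    rcases le_total s t with hst | hts
    · -- s ≤ t : G antitone on [s,t]
      have hanti : AntitoneOn G (Set.Icc s t) := by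
        apply antitoneOn_of_deriv_nonpos (convex_Icc _ _)
        · intro x hx
          exact ((hGd x (by linarith [hx.1] : (0:ℝ) < x).ne').continuousAt).continuousWithinAt
        · intro x hx
          rw [interior_Icc] at hx
          exact ((hGd x (by linarith [hx.1] : (0:ℝ) < x).ne').differentiableAt).differentiableWithinAt
        · intro x hx
          rw [interior_Icc] at hx
          obtain ⟨hx1, hx2⟩ := hx
          have hx0 : 0 < x := lt_trans hs hx1
          rw [(hGd x hx0.ne').deriv]
          have hfx : f x < m^2 := by
            rw [← hft]
            exact hfmono ⟨hx0.le, by linarith [ht']⟩ ⟨ht.le, ht'.le⟩ hx2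
          have hle : (h-x)^(2*b) ≤ m^2/x^2 := by
            rw [le_div_iff₀ (by positivity)]
            simp only [hfdef] at hfx
            linarith
          linarith
      exact hanti ⟨le_refl s, hst⟩ ⟨hst, le_refl t⟩ hst
    · rcases le_total s u with hsu | hus
      · -- t ≤ s ≤ u : G monotone on [t,s]
        have hmono : MonotoneOn G (Set.Icc t s) := by
          apply monotoneOn_of_deriv_nonneg (convex_Icc _ _)
          · intro x hx
            exact ((hGd x (by linarith [hx.1] : (0:ℝ) < x).ne').continuousAt).continuousWithinAt
          · intro x hx
            rw [interior_Icc] at hx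
            exact ((hGd x (by linarith [hx.1] : (0:ℝ) < x).ne').differentiableAt).differentiableWithinAt
          · intro x hx
            rw [interior_Icc] at hx
            obtain ⟨hx1, hx2⟩ := hx
            have hx0 : 0 < x := lt_trans ht hx1
            rw [(hGd x hx0.ne').deriv]
            have hfx : m^2 ≤ f x := by
              rcases le_total x q with hxq | hqx
              · rw [← hft]
                exact (hfmono ⟨ht.le, ht'.le⟩ ⟨hx0.le, hxq⟩ hx1).le
              · rw [← hfu]
                exact hfanti ⟨hqx, by linarith [hu.2]⟩ hu (by linarith)
            have hle : m^2/x^2 ≤ (h-x)^(2*b) := by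
              rw [div_le_iff₀ (by positivity)]
              simp only [hfdef] at hfx
              nlinarith
            linarith
        exact hmono ⟨le_refl t, hts⟩ ⟨hts, le_refl s⟩ hts
      · -- u ≤ s ≤ h : G antitone on [u,h], so G h ≤ G s, and G t ≤ h^p/p ≤ G h
        have hanti2 : AntitoneOn G (Set.Icc u h) := by
          apply antitoneOn_of_deriv_nonpos (convex_Icc _ _)
          · intro x hx
            exact ((hGd x (by linarith [hx.1, hu.1, hq0] : (0:ℝ) < x).ne').continuousAt).continuousWithinAt
          · intro x hx
            rw [interior_Icc] at hx
            exact ((hGd x (by linarith [hx.1, hu.1, hq0] : (0:ℝ) < x).ne').differentiableAt).differentiableWithinAt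
          · intro x hx
            rw [interior_Icc] at hx
            obtain ⟨hx1, hx2⟩ := hx
            have hx0 : 0 < x := by linarith [hu.1, hq0]
            rw [(hGd x hx0.ne').deriv]
            have hfx : f x ≤ m^2 := by
              rw [← hfu]
              exact hfanti hu ⟨by linarith [hu.1], hx2.le⟩ hx1.le
            have hle : (h-x)^(2*b) ≤ m^2/x^2 := by
              rw [le_div_iff₀ (by positivity)]
              simp only [hfdef] at hfx
              nlinarith
            linarith
        have h7 : G h ≤ G s := hanti2 ⟨hus, hsh⟩ ⟨hu.2, le_refl h⟩ hsh
        have h8 : h^(2*b+1)/(2*b+1) ≤ G h := by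
          simp only [hGdef, sub_self, Real.zero_rpow (show (2*b+1:ℝ) ≠ 0 by positivity), sub_zero]
          have : 0 < m^2/h := by positivity
          linarith
        exact le_trans (hGtop.trans h8) h7
  · have hmins : min h s = h := min_eq_left hsh.le
    rw [hmint, hmins, sub_self, Real.zero_rpow (show (2*b+1:ℝ) ≠ 0 by positivity), sub_zero]
    have h9 : 0 < m^2/s := by positivity
    have h10 := hGtop
    simp only [hGdef] at h10
    linarith
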